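/- Let n ≥ 1, let q₁, …, q_n : ℝ × ℝ → ℂ be twice continuously differentiable in (x,t), and let λ be a nonzero complex number. Define pointwise the 2^{n−1} × 2^{n−1} matrices Q = Q⁽ⁿ⁾ and R = R⁽ⁿ⁾ by the recursion Q⁽¹⁾ = (q₁), R⁽¹⁾ = (conj(q₁)), Q⁽ᵏ⁺¹⁾ = fromBlocks(Q⁽ᵏ⁾, q_{k+1} I; −conj(q_{k+1}) I, R⁽ᵏ⁾), R⁽ᵏ⁺¹⁾ = fromBlocks(R⁽ᵏ⁾, −q_{k+1} I; conj(q_{k+1}) I, Q⁽ᵏ⁾), and define the 2^n × 2^n block matrices U = λ·fromBlocks(I, Q_x; R_x, −I) and V = fromBlocks(−(λ/2)QR − (1/(4λ))I, −(λ/2)QRQ_x + (1/2)Q; −(λ/2)RQR_x − (1/2)R, (λ/2)QR + (1/(4λ))I). Then at every point (x,t), the zero-curvature equation U_t − V_x + U·V − V·U = 0 holds if and only if q_{i,xt} + q_i + (1/2)((Σ_{j=1}^{n}|q_j|²) q_{i,x})_x = 0 holds at that point for every i = 1, …, n. -/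

import Mathlib

open Complex Matrix

/-- Partial derivative in the first (space) variable. -/
noncomputable def pdx (F : ℝ → ℝ → ℂ) (x t : ℝ) : ℂ := deriv (fun x' => F x' t) x

/-- Partial derivative in the second (time) variable. -/
noncomputable def pdt (F : ℝ → ℝ → ℂ) (x t : ℝ) : ℂ := deriv (fun t' => F x t') t

/-- Entrywise partial derivative in the first variable of a matrix-valued function. -/
noncomputable def pdxM {ι : Type*} (F : ℝ → ℝ → Matrix ι ι ℂ) (x t : ℝ) :
    Matrix ι ι ℂ := Matrix.of fun i j => deriv (fun x' => F x' t i j) x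

/-- Entrywise partial derivative in the second variable of a matrix-valued function. -/
noncomputable def pdtM {ι : Type*} (F : ℝ → ℝ → Matrix ι ι ℂ) (x t : ℝ) :
    Matrix ι ι ℂ := Matrix.of fun i j => deriv (fun t' => F x t' i j) t

/-- The equivalence `Fin (2^k) ⊕ Fin (2^k) ≃ Fin (2^(k+1))` used to reindex block matrices. -/
def blockEquiv (k : ℕ) : Fin (2^k) ⊕ Fin (2^k) ≃ Fin (2^(k+1)) :=
  finSumFinEquiv.trans (finCongr (by ring))

/-- The pair `(Q⁽ᵏ⁺¹⁾, R⁽ᵏ⁺¹⁾)` of `2^k × 2^k` matrices built recursively from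
`q 1, …, q (k+1)`. -/
noncomputable def QRmat (q : ℕ → ℂ) : (k : ℕ) →
    Matrix (Fin (2^k)) (Fin (2^k)) ℂ × Matrix (Fin (2^k)) (Fin (2^k)) ℂ
  | 0 => (Matrix.of fun _ _ => q 1, Matrix.of fun _ _ => starRingEnd ℂ (q 1))
  | k+1 =>
    ((Matrix.reindex (blockEquiv k) (blockEquiv k))
        (Matrix.fromBlocks (QRmat q k).1
          (q (k+2) • (1 : Matrix (Fin (2^k)) (Fin (2^k)) ℂ))
          ((-(starRingEnd ℂ (q (k+2)))) • (1 : Matrix (Fin (2^k)) (Fin (2^k)) ℂ))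
          (QRmat q k).2),
     (Matrix.reindex (blockEquiv k) (blockEquiv k))
        (Matrix.fromBlocks (QRmat q k).2
          ((-(q (k+2))) • (1 : Matrix (Fin (2^k)) (Fin (2^k)) ℂ))
          ((starRingEnd ℂ (q (k+2))) • (1 : Matrix (Fin (2^k)) (Fin (2^k)) ℂ))
          (QRmat q k).1))

lemma hasDerivAt_pdx {F : ℝ → ℝ → ℂ}
    (hF : Differentiable ℝ (fun p : ℝ × ℝ => F p.1 p.2)) (x t : ℝ) :
    HasDerivAt (fun x' => F x' t) (pdx F x t) x := by
  have h1 : HasDerivAt (fun x' : ℝ => (x', t)) ((1:ℝ), (0:ℝ)) x :=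
    (hasDerivAt_id x).prodMk (hasDerivAt_const x t)
  have h2 := ((hF (x, t)).hasFDerivAt).comp_hasDerivAt x h1
  exact h2.differentiableAt.hasDerivAt

lemma hasDerivAt_pdt {F : ℝ → ℝ → ℂ}
    (hF : Differentiable ℝ (fun p : ℝ × ℝ => F p.1 p.2)) (x t : ℝ) :
    HasDerivAt (fun t' => F x t') (pdt F x t) t := by
  have h1 : HasDerivAt (fun t' : ℝ => (x, t')) ((0:ℝ), (1:ℝ)) t :=
    (hasDerivAt_const t x).prodMk (hasDerivAt_id t)
  have h2 := ((hF (x, t)).hasFDerivAt).comp_hasDerivAt t h1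
  exact h2.differentiableAt.hasDerivAt

lemma pdx_fderiv {F : ℝ → ℝ → ℂ}
    (hF : Differentiable ℝ (fun p : ℝ × ℝ => F p.1 p.2)) (x t : ℝ) :
    pdx F x t = fderiv ℝ (fun p : ℝ × ℝ => F p.1 p.2) (x, t) ((1:ℝ), (0:ℝ)) := by
  have h1 : HasDerivAt (fun x' : ℝ => (x', t)) ((1:ℝ), (0:ℝ)) x :=
    (hasDerivAt_id x).prodMk (hasDerivAt_const x t)
  have h2 := ((hF (x, t)).hasFDerivAt).comp_hasDerivAt x h1
  exact h2.deriv

lemma differentiable_pdx2 {F : ℝ → ℝ → ℂ}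
    (hF : ContDiff ℝ 2 (fun p : ℝ × ℝ => F p.1 p.2)) :
    Differentiable ℝ (fun p : ℝ × ℝ => pdx F p.1 p.2) := by
  have h1 : ContDiff ℝ 1 (fderiv ℝ (fun p : ℝ × ℝ => F p.1 p.2)) :=
    hF.fderiv_right (by norm_num)
  have h2 : Differentiable ℝ (fun p : ℝ × ℝ =>
      fderiv ℝ (fun p : ℝ × ℝ => F p.1 p.2) p ((1:ℝ), (0:ℝ))) :=
    (((ContinuousLinearMap.apply ℝ ℂ ((1:ℝ),(0:ℝ))).contDiff).comp h1).differentiable one_ne_zero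
  have h3 : (fun p : ℝ × ℝ => pdx F p.1 p.2) = (fun p : ℝ × ℝ =>
      fderiv ℝ (fun p : ℝ × ℝ => F p.1 p.2) p ((1:ℝ), (0:ℝ))) := by
    funext p
    exact pdx_fderiv (hF.differentiable (by norm_num)) p.1 p.2
  rw [h3]; exact h2

lemma deriv_conj (g : ℝ → ℂ) (x : ℝ) :
    deriv (fun y => (starRingEnd ℂ) (g y)) x = (starRingEnd ℂ) (deriv g x) := by
  by_cases h : DifferentiableAt ℝ g x
  · have := (h.hasDerivAt).star
    simp only [Complex.star_def] at this
    exact this.deriv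
  · have h' : ¬ DifferentiableAt ℝ (fun y => (starRingEnd ℂ) (g y)) x := by
      intro hc
      have := hc.star
      simp only [Complex.star_def] at this
      exact h (by simpa using this)
    rw [deriv_zero_of_not_differentiableAt h, deriv_zero_of_not_differentiableAt h', map_zero]

/-- The vector CSP operator applied to a scalar function. -/
noncomputable def Eop (σ f : ℝ → ℝ → ℂ) (x t : ℝ) : ℂ :=
  pdt (pdx f) x t + f x t
    + (1/2) * pdx (fun x' t' => σ x' t' * pdx f x' t') x t

lemma Eop_zero (σ : ℝ → ℝ → ℂ) (x t : ℝ) : Eop σ (fun _ _ => 0) x t = 0 := by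
  have h0 : pdx (fun _ _ => (0:ℂ)) = fun _ _ => 0 := by
    funext a b; simp [pdx]
  simp [Eop, h0, pdx, pdt]

lemma Eop_const_mul (σ f : ℝ → ℝ → ℂ) (c : ℂ) (x t : ℝ) :
    Eop σ (fun a b => c * f a b) x t = c * Eop σ f x t := by
  have h0 : pdx (fun a b => c * f a b) = fun a b => c * pdx f a b := by
    funext a b; simp [pdx, deriv_const_mul_field]
  have h1 : (fun x' t' => σ x' t' * (c * pdx f x' t'))
      = fun x' t' => c * (σ x' t' * pdx f x' t') := by
    funext a b; ring
  have h2 : pdt (fun a b => c * pdx f a b) x t = c * pdt (pdx f) x t := by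
    simp [pdt, deriv_const_mul_field]
  have h3 : pdx (fun x' t' => c * (σ x' t' * pdx f x' t')) x t
      = c * pdx (fun x' t' => σ x' t' * pdx f x' t') x t := by
    simp [pdx, deriv_const_mul_field]
  simp only [Eop, h0, h1, h2, h3]
  ring

lemma Eop_conj (σ f : ℝ → ℝ → ℂ) (hσ : ∀ x t, (starRingEnd ℂ) (σ x t) = σ x t) (x t : ℝ) :
    Eop σ (fun a b => (starRingEnd ℂ) (f a b)) x t = (starRingEnd ℂ) (Eop σ f x t) := by
  have h0 : pdx (fun a b => (starRingEnd ℂ) (f a b))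
      = fun a b => (starRingEnd ℂ) (pdx f a b) := by
    funext a b; simp [pdx, deriv_conj]
  have h1 : (fun x' t' => σ x' t' * (starRingEnd ℂ) (pdx f x' t'))
      = fun x' t' => (starRingEnd ℂ) (σ x' t' * pdx f x' t') := by
    funext a b; rw [_root_.map_mul, hσ]
  have h2 : pdt (fun a b => (starRingEnd ℂ) (pdx f a b)) x t
      = (starRingEnd ℂ) (pdt (pdx f) x t) := deriv_conj _ t
  have h3 : pdx (fun x' t' => (starRingEnd ℂ) (σ x' t' * pdx f x' t')) x t
      = (starRingEnd ℂ) (pdx (fun x' t' => σ x' t' * pdx f x' t') x t) := deriv_conj _ x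
  simp only [Eop, h0, h1, h2, h3]
  rw [map_add, map_add, _root_.map_mul, map_div₀, _root_.map_one, Complex.conj_ofNat]


lemma QRmat_mul (q : ℕ → ℂ) (k : ℕ) :
    (QRmat q k).1 * (QRmat q k).2
        = (∑ j ∈ Finset.Icc 1 (k+1), (‖q j‖ : ℂ)^2) • 1 ∧
    (QRmat q k).2 * (QRmat q k).1
        = (∑ j ∈ Finset.Icc 1 (k+1), (‖q j‖ : ℂ)^2) • 1 := by
  induction k with
  | zero =>
    have hcc : q 1 * starRingEnd ℂ (q 1) = (‖q 1‖ : ℂ)^2 := by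
      rw [Complex.mul_conj, ← Complex.sq_norm]
      push_cast
      ring
    have hcc2 : starRingEnd ℂ (q 1) * q 1 = (‖q 1‖ : ℂ)^2 := by
      rw [mul_comm]
      exact hcc
    constructor <;> ext i j <;> fin_cases i <;> fin_cases j <;>
      simp [QRmat, Matrix.mul_apply, hcc, hcc2]
  | succ k ih =>
    have hsum : (∑ j ∈ Finset.Icc 1 (k+1+1), (‖q j‖ : ℂ)^2)
        = (∑ j ∈ Finset.Icc 1 (k+1), (‖q j‖ : ℂ)^2)
          + (‖q (k+2)‖ : ℂ)^2 := by
      rw [Finset.sum_Icc_succ_top (by omega)]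
    have hcc : q (k+2) * starRingEnd ℂ (q (k+2)) = (‖q (k+2)‖ : ℂ)^2 := by
      rw [Complex.mul_conj, ← Complex.sq_norm]
      push_cast
      ring
    set c : ℂ := q (k+2) with hc
    set S : ℂ := ∑ j ∈ Finset.Icc 1 (k+1), (‖q j‖ : ℂ)^2 with hS
    set S' : ℂ := ∑ j ∈ Finset.Icc 1 (k+1+1), (‖q j‖ : ℂ)^2 with hS'
    have key : ∀ A B : Matrix (Fin (2^k)) (Fin (2^k)) ℂ, A * B = S • 1 → B * A = S • 1 →
        ∀ u v : ℂ, u * v = (‖c‖ : ℂ)^2 →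
        (Matrix.reindex (blockEquiv k) (blockEquiv k))
            (Matrix.fromBlocks A (u • (1 : Matrix (Fin (2^k)) (Fin (2^k)) ℂ))
              ((-v) • (1 : Matrix (Fin (2^k)) (Fin (2^k)) ℂ)) B) *
          (Matrix.reindex (blockEquiv k) (blockEquiv k))
            (Matrix.fromBlocks B ((-u) • (1 : Matrix (Fin (2^k)) (Fin (2^k)) ℂ))
              (v • (1 : Matrix (Fin (2^k)) (Fin (2^k)) ℂ)) A) = S' • 1 := by
      intro A B hAB hBA u v huv
      simp only [Matrix.reindex_apply, Matrix.submatrix_mul_equiv,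
        Matrix.fromBlocks_multiply]
      have h11 : A * B + u • (1 : Matrix (Fin (2^k)) (Fin (2^k)) ℂ) * (v • 1) = S' • 1 := by
        rw [hAB, Matrix.smul_mul, Matrix.mul_smul, Matrix.one_mul, smul_smul, huv, hsum,
          add_smul]
      have h12 : A * ((-u) • (1 : Matrix (Fin (2^k)) (Fin (2^k)) ℂ)) + (u • 1) * A = 0 := by
        rw [Matrix.mul_smul, Matrix.smul_mul, Matrix.mul_one, Matrix.one_mul, neg_smul,
          neg_add_cancel]
      have h21 : (-v) • (1 : Matrix (Fin (2^k)) (Fin (2^k)) ℂ) * B + B * (v • 1) = 0 := by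
        rw [Matrix.mul_smul, Matrix.smul_mul, Matrix.mul_one, Matrix.one_mul, neg_smul,
          neg_add_cancel]
      have h22 : ((-v) • (1 : Matrix (Fin (2^k)) (Fin (2^k)) ℂ)) * ((-u) • 1) + B * A
          = S' • 1 := by
        rw [hBA, Matrix.smul_mul, Matrix.mul_smul, Matrix.one_mul, smul_smul, neg_mul_neg,
          mul_comm v u, huv, hsum, add_smul, add_comm]
      rw [h11, h12, h21, h22,
        show (0 : Matrix (Fin (2^k)) (Fin (2^k)) ℂ) = S' • (0 : Matrix _ _ ℂ) by simp,
        ← Matrix.fromBlocks_smul, Matrix.fromBlocks_one]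
      ext i j
      simp [Matrix.submatrix_apply, Matrix.smul_apply, Matrix.one_apply]
    constructor
    · exact key _ _ ih.1 ih.2 c (starRingEnd ℂ c) hcc
    · have h := key _ _ ih.2 ih.1 (-c) (-(starRingEnd ℂ c)) (by rw [neg_mul_neg]; exact hcc)
      simp only [neg_neg] at h
      exact h

def GoodEntry (k : ℕ) (E : (ℕ → ℂ) → ℂ) : Prop :=
  (∀ q, E q = 0) ∨ ∃ m, 1 ≤ m ∧ m ≤ k + 1 ∧ ∃ ε : ℂ,
    ((∀ q, E q = ε * q m) ∨ (∀ q, E q = ε * starRingEnd ℂ (q m)))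

lemma GoodEntry.mono {k k' : ℕ} (h : k ≤ k') {E : (ℕ → ℂ) → ℂ}
    (hE : GoodEntry k E) : GoodEntry k' E := by
  rcases hE with h0 | ⟨m, h1, h2, hε⟩
  · exact Or.inl h0
  · exact Or.inr ⟨m, h1, by omega, hε⟩

lemma goodEntry_QRmat (k : ℕ) : ∀ i j : Fin (2^k),
    GoodEntry k (fun q => (QRmat q k).1 i j) ∧ GoodEntry k (fun q => (QRmat q k).2 i j) := by
  induction k with
  | zero =>
    intro i j
    constructor
    · exact Or.inr ⟨1, le_rfl, by omega, 1, Or.inl fun q => by simp [QRmat]⟩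
    · exact Or.inr ⟨1, le_rfl, by omega, 1, Or.inr fun q => by simp [QRmat]⟩
  | succ k ih =>
    intro i j
    rcases hi : (blockEquiv k).symm i with a | a <;> rcases hj : (blockEquiv k).symm j with b | b
    · constructor
      · refine GoodEntry.mono (Nat.le_succ k) ?_
        have : (fun q : ℕ → ℂ => (QRmat q (k+1)).1 i j)
            = fun q => (QRmat q k).1 a b := by
          funext q
          show (Matrix.reindex (blockEquiv k) (blockEquiv k)) _ i j = _
          rw [Matrix.reindex_apply, Matrix.submatrix_apply, hi, hj,
            Matrix.fromBlocks_apply₁₁]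
        rw [this]; exact (ih a b).1
      · refine GoodEntry.mono (Nat.le_succ k) ?_
        have : (fun q : ℕ → ℂ => (QRmat q (k+1)).2 i j)
            = fun q => (QRmat q k).2 a b := by
          funext q
          show (Matrix.reindex (blockEquiv k) (blockEquiv k)) _ i j = _
          rw [Matrix.reindex_apply, Matrix.submatrix_apply, hi, hj,
            Matrix.fromBlocks_apply₁₁]
        rw [this]; exact (ih a b).2
    · -- inl a, inr b : entries of c • 1
      by_cases hab : a = b
      · subst hab
        constructor
        · refine Or.inr ⟨k+2, by omega, by omega, 1, Or.inl fun q => ?_⟩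
          show (Matrix.reindex (blockEquiv k) (blockEquiv k)) _ i j = _
          rw [Matrix.reindex_apply, Matrix.submatrix_apply, hi, hj,
            Matrix.fromBlocks_apply₁₂]
          simp
        · refine Or.inr ⟨k+2, by omega, by omega, -1, Or.inl fun q => ?_⟩
          show (Matrix.reindex (blockEquiv k) (blockEquiv k)) _ i j = _
          rw [Matrix.reindex_apply, Matrix.submatrix_apply, hi, hj,
            Matrix.fromBlocks_apply₁₂]
          simp
      · constructor <;>
        · refine Or.inl fun q => ?_
          show (Matrix.reindex (blockEquiv k) (blockEquiv k)) _ i j = _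
          rw [Matrix.reindex_apply, Matrix.submatrix_apply, hi, hj,
            Matrix.fromBlocks_apply₁₂]
          simp [Matrix.one_apply, hab]
    · -- inr a, inl b : entries of c • 1 (lower left)
      by_cases hab : a = b
      · subst hab
        constructor
        · refine Or.inr ⟨k+2, by omega, by omega, -1, Or.inr fun q => ?_⟩
          show (Matrix.reindex (blockEquiv k) (blockEquiv k)) _ i j = _
          rw [Matrix.reindex_apply, Matrix.submatrix_apply, hi, hj,
            Matrix.fromBlocks_apply₂₁]
          simp
        · refine Or.inr ⟨k+2, by omega, by omega, 1, Or.inr fun q => ?_⟩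
          show (Matrix.reindex (blockEquiv k) (blockEquiv k)) _ i j = _
          rw [Matrix.reindex_apply, Matrix.submatrix_apply, hi, hj,
            Matrix.fromBlocks_apply₂₁]
          simp
      · constructor <;>
        · refine Or.inl fun q => ?_
          show (Matrix.reindex (blockEquiv k) (blockEquiv k)) _ i j = _
          rw [Matrix.reindex_apply, Matrix.submatrix_apply, hi, hj,
            Matrix.fromBlocks_apply₂₁]
          simp [Matrix.one_apply, hab]
    · constructor
      · refine GoodEntry.mono (Nat.le_succ k) ?_
        have : (fun q : ℕ → ℂ => (QRmat q (k+1)).1 i j)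
            = fun q => (QRmat q k).2 a b := by
          funext q
          show (Matrix.reindex (blockEquiv k) (blockEquiv k)) _ i j = _
          rw [Matrix.reindex_apply, Matrix.submatrix_apply, hi, hj,
            Matrix.fromBlocks_apply₂₂]
        rw [this]; exact (ih a b).2
      · refine GoodEntry.mono (Nat.le_succ k) ?_
        have : (fun q : ℕ → ℂ => (QRmat q (k+1)).2 i j)
            = fun q => (QRmat q k).1 a b := by
          funext q
          show (Matrix.reindex (blockEquiv k) (blockEquiv k)) _ i j = _
          rw [Matrix.reindex_apply, Matrix.submatrix_apply, hi, hj,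
            Matrix.fromBlocks_apply₂₂]
        rw [this]; exact (ih a b).1

lemma exists_entry_QRmat (k : ℕ) (m : ℕ) (h1 : 1 ≤ m) (h2 : m ≤ k + 1) :
    ∃ i j : Fin (2^k), ∀ q : ℕ → ℂ, (QRmat q k).1 i j = q m := by
  induction k with
  | zero =>
    have : m = 1 := by omega
    subst this
    exact ⟨⟨0, by norm_num⟩, ⟨0, by norm_num⟩, fun q => by simp [QRmat]⟩
  | succ k ih =>
    rcases le_or_gt m (k+1) with h | h
    · obtain ⟨i, j, hij⟩ := ih h
      refine ⟨blockEquiv k (Sum.inl i), blockEquiv k (Sum.inl j), fun q => ?_⟩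
      show (Matrix.reindex (blockEquiv k) (blockEquiv k)) _ _ _ = _
      rw [Matrix.reindex_apply, Matrix.submatrix_apply, Equiv.symm_apply_apply,
        Equiv.symm_apply_apply, Matrix.fromBlocks_apply₁₁]
      exact hij q
    · have hm : m = k + 2 := by omega
      subst hm
      refine ⟨blockEquiv k (Sum.inl ⟨0, by positivity⟩),
        blockEquiv k (Sum.inr ⟨0, by positivity⟩), fun q => ?_⟩
      show (Matrix.reindex (blockEquiv k) (blockEquiv k)) _ _ _ = _
      rw [Matrix.reindex_apply, Matrix.submatrix_apply, Equiv.symm_apply_apply,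
        Equiv.symm_apply_apply, Matrix.fromBlocks_apply₁₂]
      simp

lemma commutator_blocks {ι : Type*} [Fintype ι] [DecidableEq ι]
    (lam s sx : ℂ) (hlam : lam ≠ 0) (A B Ax Bx : Matrix ι ι ℂ)
    (hAB : A * B = s • 1) (hBA : B * A = s • 1)
    (hd : Ax * B + A * Bx = sx • 1) (hd' : Bx * A + B * Ax = sx • 1) :
    (lam • Matrix.fromBlocks 1 Ax Bx (-1)) *
      (Matrix.fromBlocks (-(lam/2) • (A * B) - (1/(4*lam)) • 1)
        (-(lam/2) • (A * B * Ax) + (1/2 : ℂ) • A)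
        (-(lam/2) • (B * A * Bx) - (1/2 : ℂ) • B)
        ((lam/2) • (A * B) + (1/(4*lam)) • 1)) -
    (Matrix.fromBlocks (-(lam/2) • (A * B) - (1/(4*lam)) • 1)
        (-(lam/2) • (A * B * Ax) + (1/2 : ℂ) • A)
        (-(lam/2) • (B * A * Bx) - (1/2 : ℂ) • B)
        ((lam/2) • (A * B) + (1/(4*lam)) • 1)) *
      (lam • Matrix.fromBlocks 1 Ax Bx (-1)) =
    lam • Matrix.fromBlocks ((-(1/2) * sx) • 1) (A + (1/(2*lam)) • Ax)
      (B - (1/(2*lam)) • Bx) (((1/2) * sx) • 1) := by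
  have hAxB : Ax * B = sx • 1 - A * Bx := eq_sub_of_add_eq hd
  have hBxA : Bx * A = sx • 1 - B * Ax := eq_sub_of_add_eq hd'
  have h1 : A * B * Ax = s • Ax := by rw [hAB, Matrix.smul_mul, Matrix.one_mul]
  have h2 : B * A * Bx = s • Bx := by rw [hBA, Matrix.smul_mul, Matrix.one_mul]
  have e4 : (1:ℂ)/(2*lam) = 1/(4*lam) + 1/(4*lam) := by
    field_simp
    ring
  rw [e4, h1, h2, hAB, Matrix.smul_mul, Matrix.mul_smul, ← smul_sub,
    Matrix.fromBlocks_multiply, Matrix.fromBlocks_multiply]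
  rw [sub_eq_add_neg, Matrix.fromBlocks_neg, Matrix.fromBlocks_add]
  congr 1
  rw [Matrix.fromBlocks_inj]
  refine ⟨?_, ?_, ?_, ?_⟩ <;>
  · simp only [Matrix.mul_add, Matrix.add_mul, Matrix.mul_sub, Matrix.sub_mul,
      Matrix.mul_smul, Matrix.smul_mul, Matrix.one_mul, Matrix.mul_one, smul_smul,
      Matrix.mul_neg, Matrix.neg_mul, neg_smul, hAxB, hBxA]
    module

lemma goodEntry_contDiff (n k : ℕ) (hk : k + 1 ≤ n) (q : ℕ → ℝ → ℝ → ℂ)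
    (hq : ∀ i ∈ Finset.Icc 1 n, ContDiff ℝ 2 (fun p : ℝ × ℝ => q i p.1 p.2))
    (E : (ℕ → ℂ) → ℂ) (hE : GoodEntry k E) :
    ContDiff ℝ 2 (fun p : ℝ × ℝ => E (fun m => q m p.1 p.2)) := by
  rcases hE with h0 | ⟨m, h1, h2, ε, he | he⟩
  · have : (fun p : ℝ × ℝ => E (fun m => q m p.1 p.2)) = fun _ => (0:ℂ) := by
      funext p; exact h0 _
    rw [this]; exact contDiff_const
  · have : (fun p : ℝ × ℝ => E (fun m => q m p.1 p.2))
        = fun p => ε * q m p.1 p.2 := by funext p; exact he _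
    rw [this]; exact contDiff_const.mul (hq m (Finset.mem_Icc.mpr ⟨h1, by omega⟩))
  · have : (fun p : ℝ × ℝ => E (fun m => q m p.1 p.2))
        = fun p => ε * (starRingEnd ℂ) (q m p.1 p.2) := by funext p; exact he _
    rw [this]
    refine contDiff_const.mul ?_
    have h := Complex.conjCLE.contDiff.comp (hq m (Finset.mem_Icc.mpr ⟨h1, by omega⟩))
    simpa [Function.comp_def] using h

lemma goodEntry_Eop_zero (n k : ℕ) (hk : k + 1 ≤ n) (q : ℕ → ℝ → ℝ → ℂ) (σ : ℝ → ℝ → ℂ)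
    (hσconj : ∀ x t, (starRingEnd ℂ) (σ x t) = σ x t)
    (E : (ℕ → ℂ) → ℂ) (hE : GoodEntry k E) (x t : ℝ)
    (hscalar : ∀ i ∈ Finset.Icc 1 n, Eop σ (q i) x t = 0) :
    Eop σ (fun a b => E (fun m => q m a b)) x t = 0 := by
  rcases hE with h0 | ⟨m, h1, h2, ε, he | he⟩
  · have : (fun a b : ℝ => E (fun m => q m a b)) = fun _ _ => (0:ℂ) := by
      funext a b; exact h0 _
    rw [this]; exact Eop_zero σ x t
  · have : (fun a b : ℝ => E (fun m => q m a b)) = fun a b => ε * q m a b := by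
      funext a b; exact he _
    rw [this, Eop_const_mul, hscalar m (Finset.mem_Icc.mpr ⟨h1, by omega⟩), mul_zero]
  · have : (fun a b : ℝ => E (fun m => q m a b))
        = fun a b => ε * (starRingEnd ℂ) (q m a b) := by funext a b; exact he _
    rw [this, Eop_const_mul, Eop_conj σ (q m) hσconj,
      hscalar m (Finset.mem_Icc.mpr ⟨h1, by omega⟩), map_zero, mul_zero]

lemma key_iff (n : ℕ) (hn : 1 ≤ n)
    (q : ℕ → ℝ → ℝ → ℂ)
    (hq : ∀ i ∈ Finset.Icc 1 n, ContDiff ℝ 2 (fun p : ℝ × ℝ => q i p.1 p.2))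
    (lam : ℂ) (hlam : lam ≠ 0)
    (Q R : ℝ → ℝ → Matrix (Fin (2^(n-1))) (Fin (2^(n-1))) ℂ)
    (hQ : ∀ x t, Q x t = (QRmat (fun i => q i x t) (n-1)).1)
    (hR : ∀ x t, R x t = (QRmat (fun i => q i x t) (n-1)).2)
    (U V : ℝ → ℝ → Matrix (Fin (2^(n-1)) ⊕ Fin (2^(n-1))) (Fin (2^(n-1)) ⊕ Fin (2^(n-1))) ℂ)
    (hU : ∀ x t, U x t = lam • Matrix.fromBlocks
      (1 : Matrix (Fin (2^(n-1))) (Fin (2^(n-1))) ℂ) (pdxM Q x t) (pdxM R x t) (-1))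
    (hV : ∀ x t, V x t = Matrix.fromBlocks
      (-(lam/2) • (Q x t * R x t)
        - (1/(4*lam)) • (1 : Matrix (Fin (2^(n-1))) (Fin (2^(n-1))) ℂ))
      (-(lam/2) • (Q x t * R x t * pdxM Q x t) + (1/2 : ℂ) • Q x t)
      (-(lam/2) • (R x t * Q x t * pdxM R x t) - (1/2 : ℂ) • R x t)
      ((lam/2) • (Q x t * R x t)
        + (1/(4*lam)) • (1 : Matrix (Fin (2^(n-1))) (Fin (2^(n-1))) ℂ)))
    (x t : ℝ) :
    (pdtM U x t - pdxM V x t + U x t * V x t - V x t * U x t = 0) ↔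
    (∀ i ∈ Finset.Icc 1 n,
      Eop (fun a b => ∑ j ∈ Finset.Icc 1 n, (‖q j a b‖ : ℂ)^2) (q i) x t = 0) := by
  set σ : ℝ → ℝ → ℂ := fun a b => ∑ j ∈ Finset.Icc 1 n, (‖q j a b‖ : ℂ)^2
    with hσdef
  have hσconj : ∀ a b, (starRingEnd ℂ) (σ a b) = σ a b := by
    intro a b
    simp only [hσdef, map_sum, map_pow, Complex.conj_ofReal]
  have hσmulform : ∀ a b, σ a b
      = ∑ j ∈ Finset.Icc 1 n, q j a b * (starRingEnd ℂ) (q j a b) := by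
    intro a b
    refine Finset.sum_congr rfl fun j _ => ?_
    rw [Complex.mul_conj, ← Complex.sq_norm]
    push_cast
    ring
  have hσC2 : ContDiff ℝ 2 (fun p : ℝ × ℝ => σ p.1 p.2) := by
    have hfn : (fun p : ℝ × ℝ => σ p.1 p.2)
        = fun p => ∑ j ∈ Finset.Icc 1 n, q j p.1 p.2 * (starRingEnd ℂ) (q j p.1 p.2) := by
      funext p; exact hσmulform p.1 p.2
    rw [hfn]
    refine ContDiff.sum fun j hj => (hq j hj).mul ?_
    have h := Complex.conjCLE.contDiff.comp (hq j hj)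
    simpa [Function.comp_def] using h
  have hσd : ∀ a b, HasDerivAt (fun x' => σ x' b) (pdx σ a b) a :=
    fun a b => hasDerivAt_pdx (hσC2.differentiable (by norm_num)) a b
  have hkn : (n-1) + 1 = n := by omega
  have hQR : ∀ a b, Q a b * R a b = σ a b • 1 := by
    intro a b
    rw [hQ, hR, (QRmat_mul (fun m => q m a b) (n-1)).1, hσdef, hkn]
  have hRQ : ∀ a b, R a b * Q a b = σ a b • 1 := by
    intro a b
    rw [hQ, hR, (QRmat_mul (fun m => q m a b) (n-1)).2, hσdef, hkn]
  have hQC2 : ∀ i j, ContDiff ℝ 2 (fun p : ℝ × ℝ => Q p.1 p.2 i j) := by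
    intro i j
    have h := goodEntry_contDiff n (n-1) (by omega) q hq _ (goodEntry_QRmat (n-1) i j).1
    have hfn : (fun p : ℝ × ℝ => Q p.1 p.2 i j)
        = fun p : ℝ × ℝ => (QRmat (fun m => q m p.1 p.2) (n-1)).1 i j := by
      funext p; rw [hQ]
    rw [hfn]; exact h
  have hRC2 : ∀ i j, ContDiff ℝ 2 (fun p : ℝ × ℝ => R p.1 p.2 i j) := by
    intro i j
    have h := goodEntry_contDiff n (n-1) (by omega) q hq _ (goodEntry_QRmat (n-1) i j).2
    have hfn : (fun p : ℝ × ℝ => R p.1 p.2 i j)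
        = fun p : ℝ × ℝ => (QRmat (fun m => q m p.1 p.2) (n-1)).2 i j := by
      funext p; rw [hR]
    rw [hfn]; exact h
  have hQd : ∀ i j a b, HasDerivAt (fun x' => Q x' b i j) (pdxM Q a b i j) a := by
    intro i j a b
    exact hasDerivAt_pdx (F := fun u v => Q u v i j)
      ((hQC2 i j).differentiable (by norm_num)) a b
  have hRd : ∀ i j a b, HasDerivAt (fun x' => R x' b i j) (pdxM R a b i j) a := by
    intro i j a b
    exact hasDerivAt_pdx (F := fun u v => R u v i j)
      ((hRC2 i j).differentiable (by norm_num)) a b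
  have hQxd_x : ∀ i j a b, HasDerivAt (fun x' => pdxM Q x' b i j)
      (pdx (fun u v => pdxM Q u v i j) a b) a := by
    intro i j a b
    exact hasDerivAt_pdx (differentiable_pdx2 (F := fun u v => Q u v i j) (hQC2 i j)) a b
  have hRxd_x : ∀ i j a b, HasDerivAt (fun x' => pdxM R x' b i j)
      (pdx (fun u v => pdxM R u v i j) a b) a := by
    intro i j a b
    exact hasDerivAt_pdx (differentiable_pdx2 (F := fun u v => R u v i j) (hRC2 i j)) a b
  have hQxd_t : ∀ i j a b, HasDerivAt (fun t' => pdxM Q a t' i j)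
      (pdt (pdx (fun u v => Q u v i j)) a b) b := by
    intro i j a b
    exact hasDerivAt_pdt (differentiable_pdx2 (F := fun u v => Q u v i j) (hQC2 i j)) a b
  have hRxd_t : ∀ i j a b, HasDerivAt (fun t' => pdxM R a t' i j)
      (pdt (pdx (fun u v => R u v i j)) a b) b := by
    intro i j a b
    exact hasDerivAt_pdt (differentiable_pdx2 (F := fun u v => R u v i j) (hRC2 i j)) a b
  have hM0 : ∀ a b, pdxM Q a b * R a b + Q a b * pdxM R a b = pdx σ a b • 1 := by
    intro a b
    ext i j
    have h1 : HasDerivAt (fun x' => ∑ l, Q x' b i l * R x' b l j)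
        (∑ l, (pdxM Q a b i l * R a b l j + Q a b i l * pdxM R a b l j)) a :=
      HasDerivAt.fun_sum fun l _ => (hQd i l a b).fun_mul (hRd l j a b)
    have h2 : (fun x' => ∑ l, Q x' b i l * R x' b l j)
        = fun x' => σ x' b * (1 : Matrix (Fin (2^(n-1))) (Fin (2^(n-1))) ℂ) i j := by
      funext x'
      rw [← Matrix.mul_apply, hQR x' b, Matrix.smul_apply, smul_eq_mul]
    rw [h2] at h1
    have h4 := h1.unique ((hσd a b).mul_const ((1 : Matrix (Fin (2^(n-1))) (Fin (2^(n-1))) ℂ) i j))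
    simp only [Matrix.add_apply, Matrix.mul_apply, Matrix.smul_apply, smul_eq_mul]
    rw [← Finset.sum_add_distrib]
    exact h4
  have hM0' : ∀ a b, pdxM R a b * Q a b + R a b * pdxM Q a b = pdx σ a b • 1 := by
    intro a b
    ext i j
    have h1 : HasDerivAt (fun x' => ∑ l, R x' b i l * Q x' b l j)
        (∑ l, (pdxM R a b i l * Q a b l j + R a b i l * pdxM Q a b l j)) a :=
      HasDerivAt.fun_sum fun l _ => (hRd i l a b).fun_mul (hQd l j a b)
    have h2 : (fun x' => ∑ l, R x' b i l * Q x' b l j)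
        = fun x' => σ x' b * (1 : Matrix (Fin (2^(n-1))) (Fin (2^(n-1))) ℂ) i j := by
      funext x'
      rw [← Matrix.mul_apply, hRQ x' b, Matrix.smul_apply, smul_eq_mul]
    rw [h2] at h1
    have h4 := h1.unique ((hσd a b).mul_const ((1 : Matrix (Fin (2^(n-1))) (Fin (2^(n-1))) ℂ) i j))
    simp only [Matrix.add_apply, Matrix.mul_apply, Matrix.smul_apply, smul_eq_mul]
    rw [← Finset.sum_add_distrib]
    exact h4
  have hcomm : ∀ a b, U a b * V a b - V a b * U a b = lam • Matrix.fromBlocks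
      ((-(1/2) * pdx σ a b) • 1) (Q a b + (1/(2*lam)) • pdxM Q a b)
      (R a b - (1/(2*lam)) • pdxM R a b) (((1/2) * pdx σ a b) • 1) := by
    intro a b
    rw [hU a b, hV a b]
    exact commutator_blocks lam (σ a b) (pdx σ a b) hlam _ _ _ _
      (hQR a b) (hRQ a b) (hM0 a b) (hM0' a b)
  have key : pdtM U x t - pdxM V x t + U x t * V x t - V x t * U x t
      = lam • Matrix.fromBlocks 0
        (Matrix.of fun i j => Eop σ (fun u v => Q u v i j) x t)
        (Matrix.of fun i j => Eop σ (fun u v => R u v i j) x t) 0 := by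
    rw [add_sub_assoc, hcomm x t]
    ext u v
    rcases u with i | i <;> rcases v with j | j
    · -- (inl, inl)
      have hU11 : (fun t' : ℝ => U x t' (Sum.inl i) (Sum.inl j))
          = fun _ => lam * (1 : Matrix (Fin (2^(n-1))) (Fin (2^(n-1))) ℂ) i j := by
        funext t'; rw [hU]
        simp [Matrix.smul_apply, Matrix.fromBlocks_apply₁₁, smul_eq_mul]
      have hV11 : (fun x' : ℝ => V x' t (Sum.inl i) (Sum.inl j))
          = fun x' => -(lam/2) * σ x' t * (1 : Matrix (Fin (2^(n-1))) (Fin (2^(n-1))) ℂ) i j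
            - (1/(4*lam)) * (1 : Matrix (Fin (2^(n-1))) (Fin (2^(n-1))) ℂ) i j := by
        funext x'; rw [hV]
        simp only [Matrix.fromBlocks_apply₁₁, Matrix.sub_apply, Matrix.smul_apply,
          hQR x' t, smul_eq_mul]
        ring
      have hd : HasDerivAt (fun x' => -(lam/2) * σ x' t
            * (1 : Matrix (Fin (2^(n-1))) (Fin (2^(n-1))) ℂ) i j
            - (1/(4*lam)) * (1 : Matrix (Fin (2^(n-1))) (Fin (2^(n-1))) ℂ) i j)
          (-(lam/2) * pdx σ x t * (1 : Matrix (Fin (2^(n-1))) (Fin (2^(n-1))) ℂ) i j) x :=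
        (((hσd x t).const_mul (-(lam/2))).mul_const _).sub_const _
      simp only [pdtM, pdxM, Matrix.of_apply, Matrix.add_apply, Matrix.sub_apply,
        Matrix.smul_apply, Matrix.fromBlocks_apply₁₁, smul_eq_mul, Matrix.zero_apply]
      rw [hU11, deriv_const, hV11, hd.deriv]
      ring
    · -- (inl, inr)
      have hU12 : (fun t' : ℝ => U x t' (Sum.inl i) (Sum.inr j))
          = fun t' => lam * pdxM Q x t' i j := by
        funext t'; rw [hU]
        simp [Matrix.smul_apply, Matrix.fromBlocks_apply₁₂, smul_eq_mul]
      have hV12 : (fun x' : ℝ => V x' t (Sum.inl i) (Sum.inr j))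
          = fun x' => -(lam/2) * (σ x' t * pdxM Q x' t i j) + (1/2) * Q x' t i j := by
        funext x'; rw [hV]
        simp only [Matrix.fromBlocks_apply₁₂, Matrix.add_apply, Matrix.smul_apply,
          hQR x' t, Matrix.smul_mul, Matrix.one_mul, smul_eq_mul, smul_smul]
        ring
      have hprod : HasDerivAt (fun x' => σ x' t * pdxM Q x' t i j)
          (pdx σ x t * pdxM Q x t i j + σ x t * pdx (fun u v => pdxM Q u v i j) x t) x :=
        (hσd x t).mul (hQxd_x i j x t)
      have hDeq : pdx (fun x' t' => σ x' t' * pdx (fun u v => Q u v i j) x' t') x t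
          = pdx σ x t * pdxM Q x t i j + σ x t * pdx (fun u v => pdxM Q u v i j) x t :=
        hprod.deriv
      have hd : HasDerivAt (fun x' => -(lam/2) * (σ x' t * pdxM Q x' t i j)
            + (1/2) * Q x' t i j)
          (-(lam/2) * (pdx σ x t * pdxM Q x t i j
            + σ x t * pdx (fun u v => pdxM Q u v i j) x t)
            + (1/2) * pdxM Q x t i j) x :=
        (hprod.const_mul (-(lam/2))).add ((hQd i j x t).const_mul (1/2))
      have hUd : HasDerivAt (fun t' => lam * pdxM Q x t' i j)
          (lam * pdt (pdx (fun u v => Q u v i j)) x t) t :=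
        (hQxd_t i j x t).const_mul lam
      simp only [pdtM, pdxM, Matrix.of_apply, Matrix.add_apply, Matrix.sub_apply,
        Matrix.smul_apply, Matrix.fromBlocks_apply₁₂, smul_eq_mul]
      rw [hU12, hUd.deriv, hV12, hd.deriv, Eop, hDeq]
      simp only [pdx, pdt, pdxM, pdtM, Matrix.of_apply]
      field_simp
      ring
    · -- (inr, inl)
      have hU21 : (fun t' : ℝ => U x t' (Sum.inr i) (Sum.inl j))
          = fun t' => lam * pdxM R x t' i j := by
        funext t'; rw [hU]
        simp [Matrix.smul_apply, Matrix.fromBlocks_apply₂₁, smul_eq_mul]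
      have hV21 : (fun x' : ℝ => V x' t (Sum.inr i) (Sum.inl j))
          = fun x' => -(lam/2) * (σ x' t * pdxM R x' t i j) - (1/2) * R x' t i j := by
        funext x'; rw [hV]
        simp only [Matrix.fromBlocks_apply₂₁, Matrix.sub_apply, Matrix.smul_apply,
          hRQ x' t, Matrix.smul_mul, Matrix.one_mul, smul_eq_mul, smul_smul]
        ring
      have hprod : HasDerivAt (fun x' => σ x' t * pdxM R x' t i j)
          (pdx σ x t * pdxM R x t i j + σ x t * pdx (fun u v => pdxM R u v i j) x t) x :=
        (hσd x t).mul (hRxd_x i j x t)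
      have hDeq : pdx (fun x' t' => σ x' t' * pdx (fun u v => R u v i j) x' t') x t
          = pdx σ x t * pdxM R x t i j + σ x t * pdx (fun u v => pdxM R u v i j) x t :=
        hprod.deriv
      have hd : HasDerivAt (fun x' => -(lam/2) * (σ x' t * pdxM R x' t i j)
            - (1/2) * R x' t i j)
          (-(lam/2) * (pdx σ x t * pdxM R x t i j
            + σ x t * pdx (fun u v => pdxM R u v i j) x t)
            - (1/2) * pdxM R x t i j) x :=
        (hprod.const_mul (-(lam/2))).sub ((hRd i j x t).const_mul (1/2))
      have hUd : HasDerivAt (fun t' => lam * pdxM R x t' i j)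
          (lam * pdt (pdx (fun u v => R u v i j)) x t) t :=
        (hRxd_t i j x t).const_mul lam
      simp only [pdtM, pdxM, Matrix.of_apply, Matrix.add_apply, Matrix.sub_apply,
        Matrix.smul_apply, Matrix.fromBlocks_apply₂₁, smul_eq_mul]
      rw [hU21, hUd.deriv, hV21, hd.deriv, Eop, hDeq]
      simp only [pdx, pdt, pdxM, pdtM, Matrix.of_apply]
      field_simp
      ring
    · -- (inr, inr)
      have hU22 : (fun t' : ℝ => U x t' (Sum.inr i) (Sum.inr j))
          = fun _ => lam * (-1 : Matrix (Fin (2^(n-1))) (Fin (2^(n-1))) ℂ) i j := by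
        funext t'; rw [hU]
        simp [Matrix.smul_apply, Matrix.fromBlocks_apply₂₂, smul_eq_mul]
      have hV22 : (fun x' : ℝ => V x' t (Sum.inr i) (Sum.inr j))
          = fun x' => (lam/2) * σ x' t * (1 : Matrix (Fin (2^(n-1))) (Fin (2^(n-1))) ℂ) i j
            + (1/(4*lam)) * (1 : Matrix (Fin (2^(n-1))) (Fin (2^(n-1))) ℂ) i j := by
        funext x'; rw [hV]
        simp only [Matrix.fromBlocks_apply₂₂, Matrix.add_apply, Matrix.smul_apply,
          hQR x' t, smul_eq_mul]
        ring
      have hd : HasDerivAt (fun x' => (lam/2) * σ x' t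
            * (1 : Matrix (Fin (2^(n-1))) (Fin (2^(n-1))) ℂ) i j
            + (1/(4*lam)) * (1 : Matrix (Fin (2^(n-1))) (Fin (2^(n-1))) ℂ) i j)
          ((lam/2) * pdx σ x t * (1 : Matrix (Fin (2^(n-1))) (Fin (2^(n-1))) ℂ) i j) x :=
        (((hσd x t).const_mul (lam/2)).mul_const _).add_const _
      simp only [pdtM, pdxM, Matrix.of_apply, Matrix.add_apply, Matrix.sub_apply,
        Matrix.smul_apply, Matrix.fromBlocks_apply₂₂, smul_eq_mul, Matrix.zero_apply]
      rw [hU22, deriv_const, hV22, hd.deriv]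
      ring
  rw [key]
  constructor
  · intro h i hi
    have hlz : Matrix.fromBlocks 0
        (Matrix.of fun i j => Eop σ (fun u v => Q u v i j) x t)
        (Matrix.of fun i j => Eop σ (fun u v => R u v i j) x t) 0
        = (0 : Matrix (Fin (2^(n-1)) ⊕ Fin (2^(n-1))) (Fin (2^(n-1)) ⊕ Fin (2^(n-1))) ℂ) := by
      rcases smul_eq_zero.mp h with h' | h'
      · exact absurd h' hlam
      · exact h'
    obtain ⟨hi1, hi2⟩ := Finset.mem_Icc.mp hi
    obtain ⟨a, b, hab⟩ := exists_entry_QRmat (n-1) i hi1 (by omega)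
    have hfun : (fun u v => Q u v a b) = q i := by
      funext u v; rw [hQ]; exact hab _
    have hz := congr_fun (congr_fun hlz (Sum.inl a)) (Sum.inr b)
    simp only [Matrix.fromBlocks_apply₁₂, Matrix.of_apply, Matrix.zero_apply] at hz
    rw [hfun] at hz
    exact hz
  · intro hs
    have hEQ : (Matrix.of fun i j => Eop σ (fun u v => Q u v i j) x t)
        = (0 : Matrix (Fin (2^(n-1))) (Fin (2^(n-1))) ℂ) := by
      ext a b
      have hfun : (fun u v => Q u v a b)
          = fun u v => (fun q' => (QRmat q' (n-1)).1 a b) (fun m => q m u v) := by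
        funext u v; rw [hQ]
      simp only [Matrix.of_apply, Matrix.zero_apply]
      rw [hfun]
      exact goodEntry_Eop_zero n (n-1) (by omega) q σ hσconj _
        (goodEntry_QRmat (n-1) a b).1 x t hs
    have hER : (Matrix.of fun i j => Eop σ (fun u v => R u v i j) x t)
        = (0 : Matrix (Fin (2^(n-1))) (Fin (2^(n-1))) ℂ) := by
      ext a b
      have hfun : (fun u v => R u v a b)
          = fun u v => (fun q' => (QRmat q' (n-1)).2 a b) (fun m => q m u v) := by
        funext u v; rw [hR]
      simp only [Matrix.of_apply, Matrix.zero_apply]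
      rw [hfun]
      exact goodEntry_Eop_zero n (n-1) (by omega) q σ hσconj _
        (goodEntry_QRmat (n-1) a b).2 x t hs
    rw [hEQ, hER, Matrix.fromBlocks_zero, smul_zero]


/-- The zero-curvature equation for the Lax pair of the vector complex short pulse
equation holds at a point iff all `n` component equations hold at that point. -/
theorem vcsp_zero_curvature_iff
    (n : ℕ) (hn : 1 ≤ n)
    (q : ℕ → ℝ → ℝ → ℂ)
    (hq : ∀ i ∈ Finset.Icc 1 n, ContDiff ℝ 2 (fun p : ℝ × ℝ => q i p.1 p.2))
    (lam : ℂ) (hlam : lam ≠ 0)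
    (Q R : ℝ → ℝ → Matrix (Fin (2^(n-1))) (Fin (2^(n-1))) ℂ)
    (hQ : ∀ x t, Q x t = (QRmat (fun i => q i x t) (n-1)).1)
    (hR : ∀ x t, R x t = (QRmat (fun i => q i x t) (n-1)).2)
    (U V : ℝ → ℝ → Matrix (Fin (2^(n-1)) ⊕ Fin (2^(n-1))) (Fin (2^(n-1)) ⊕ Fin (2^(n-1))) ℂ)
    (hU : ∀ x t, U x t = lam • Matrix.fromBlocks
      (1 : Matrix (Fin (2^(n-1))) (Fin (2^(n-1))) ℂ) (pdxM Q x t) (pdxM R x t) (-1))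
    (hV : ∀ x t, V x t = Matrix.fromBlocks
      (-(lam/2) • (Q x t * R x t)
        - (1/(4*lam)) • (1 : Matrix (Fin (2^(n-1))) (Fin (2^(n-1))) ℂ))
      (-(lam/2) • (Q x t * R x t * pdxM Q x t) + (1/2 : ℂ) • Q x t)
      (-(lam/2) • (R x t * Q x t * pdxM R x t) - (1/2 : ℂ) • R x t)
      ((lam/2) • (Q x t * R x t)
        + (1/(4*lam)) • (1 : Matrix (Fin (2^(n-1))) (Fin (2^(n-1))) ℂ))) :
    ∀ x t,
      (pdtM U x t - pdxM V x t + U x t * V x t - V x t * U x t = 0) ↔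
      (∀ i ∈ Finset.Icc 1 n,
        pdt (pdx (q i)) x t + q i x t
          + (1/2) * pdx (fun x' t' =>
              (∑ j ∈ Finset.Icc 1 n, (‖q j x' t'‖ : ℂ)^2)
                * pdx (q i) x' t') x t = 0) := by
  intro x t
  exact key_iff n hn q hq lam hlam Q R hQ hR U V hU hV x t
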